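/- For all t > s' > s > 0 and x ∈ ℝ: if s' ∈ [s, (t+s)/2], then ∫_s^{s'} exp(-(t-r)(r-s) x² / (t-s)) dr ≤ 2 (1 - e^{-x²(s'-s)/2}) / x²; and if s' ∈ ((t+s)/2, t], then ∫_s^{s'} exp(-(t-r)(r-s) x² / (t-s)) dr ≤ 2 (1 - 2 e^{-x²(t-s)/4} + e^{-x²(t-s')/2}) / x². -/

import Mathlib

open MeasureTheory intervalIntegral

lemma exp_antideriv (c s a b : ℝ) (hc : c ≠ 0) :
    ∫ r in a..b, Real.exp (-c * (r - s)) =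
      (Real.exp (-c * (a - s)) - Real.exp (-c * (b - s))) / c := by
  have h : ∀ r : ℝ, HasDerivAt (fun r => -Real.exp (-c * (r - s)) / c)
      (Real.exp (-c * (r - s))) r := by
    intro r
    have h1 : HasDerivAt (fun r : ℝ => -c * (r - s)) (-c) r := by
      simpa using ((hasDerivAt_id r).sub_const s).const_mul (-c)
    have h2 := h1.exp
    have h3 := (h2.neg).div_const c
    convert h3 using 1
    · rfl
    · rfl
    · rfl
    · rw [eq_div_iff hc]; ring
  have := intervalIntegral.integral_eq_sub_of_hasDerivAt (f := fun r => -Real.exp (-c * (r - s)) / c)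
    (fun r _ => h r) ((Real.continuous_exp.comp (by continuity)).intervalIntegrable a b)
  rw [this]; ring

theorem bridge_integral_bound (t s' s x : ℝ) (hs : 0 < s) (hss' : s < s') (hs't : s' < t)
    (hx : x ≠ 0) :
    (s' ≤ (t + s) / 2 →
      (∫ r in s..s', Real.exp (-((t - r) * (r - s) * x^2) / (t - s))) ≤
        2 * (1 - Real.exp (-(x^2 / 2) * (s' - s))) / x^2) ∧
    ((t + s) / 2 < s' →
      (∫ r in s..s', Real.exp (-((t - r) * (r - s) * x^2) / (t - s))) ≤
        2 * (1 - 2 * Real.exp (-(x^2 / 4) * (t - s)) + Real.exp (-(x^2 / 2) * (t - s'))) / x^2) := by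
  have hts : 0 < t - s := by linarith
  have hx2 : 0 < x ^ 2 := by positivity
  have hc : x ^ 2 / 2 ≠ 0 := by positivity
  have hintf : ∀ a b : ℝ, IntervalIntegrable
      (fun r => Real.exp (-((t - r) * (r - s) * x^2) / (t - s))) volume a b := by
    intro a b
    exact (Real.continuous_exp.comp (by continuity)).intervalIntegrable a b
  have hintg : ∀ a b : ℝ, IntervalIntegrable
      (fun r => Real.exp (-(x^2/2) * (r - s))) volume a b := by
    intro a b
    exact (Real.continuous_exp.comp (by continuity)).intervalIntegrable a b
  have hintg2 : ∀ a b : ℝ, IntervalIntegrable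
      (fun r => Real.exp (-(x^2/2) * (t - r))) volume a b := by
    intro a b
    exact (Real.continuous_exp.comp (by continuity)).intervalIntegrable a b
  -- pointwise bounds
  have hpt1 : ∀ r, s ≤ r → r ≤ (t + s) / 2 →
      Real.exp (-((t - r) * (r - s) * x^2) / (t - s)) ≤ Real.exp (-(x^2/2) * (r - s)) := by
    intro r h1 h2
    apply Real.exp_le_exp.mpr
    rw [div_le_iff₀ hts]
    nlinarith [mul_nonneg (mul_nonneg (by linarith : (0:ℝ) ≤ t - r - (t-s)/2)
      (by linarith : (0:ℝ) ≤ r - s)) hx2.le]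
  have hpt2 : ∀ r, (t + s) / 2 ≤ r → r ≤ t →
      Real.exp (-((t - r) * (r - s) * x^2) / (t - s)) ≤ Real.exp (-(x^2/2) * (t - r)) := by
    intro r h1 h2
    apply Real.exp_le_exp.mpr
    rw [div_le_iff₀ hts]
    nlinarith [mul_nonneg (mul_nonneg (by linarith : (0:ℝ) ≤ r - s - (t-s)/2)
      (by linarith : (0:ℝ) ≤ t - r)) hx2.le]
  constructor
  · intro h
    have hb : (∫ r in s..s', Real.exp (-((t - r) * (r - s) * x^2) / (t - s))) ≤
        ∫ r in s..s', Real.exp (-(x^2/2) * (r - s)) := by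
      apply intervalIntegral.integral_mono_on hss'.le (hintf s s') (hintg s s')
      intro r hr
      exact hpt1 r hr.1 (le_trans hr.2 h)
    rw [exp_antideriv _ _ _ _ hc] at hb
    calc _ ≤ _ := hb
      _ = 2 * (1 - Real.exp (-(x^2 / 2) * (s' - s))) / x^2 := by
        rw [show -(x^2/2) * (s - s) = 0 by ring, Real.exp_zero]
        field_simp
  · intro h
    set m := (t + s) / 2 with hm
    have hsm : s < m := by simp [hm]; linarith
    have hms' : m < s' := h
    have hsplit : (∫ r in s..s', Real.exp (-((t - r) * (r - s) * x^2) / (t - s))) =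
        (∫ r in s..m, Real.exp (-((t - r) * (r - s) * x^2) / (t - s))) +
        (∫ r in m..s', Real.exp (-((t - r) * (r - s) * x^2) / (t - s))) := by
      rw [intervalIntegral.integral_add_adjacent_intervals (hintf s m) (hintf m s')]
    have hb1 : (∫ r in s..m, Real.exp (-((t - r) * (r - s) * x^2) / (t - s))) ≤
        ∫ r in s..m, Real.exp (-(x^2/2) * (r - s)) := by
      apply intervalIntegral.integral_mono_on hsm.le (hintf s m) (hintg s m)
      intro r hr; exact hpt1 r hr.1 hr.2
    have hb2 : (∫ r in m..s', Real.exp (-((t - r) * (r - s) * x^2) / (t - s))) ≤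
        ∫ r in m..s', Real.exp (-(x^2/2) * (t - r)) := by
      apply intervalIntegral.integral_mono_on hms'.le (hintf m s') (hintg2 m s')
      intro r hr; exact hpt2 r hr.1 (le_trans hr.2 hs't.le)
    have e1 : (∫ r in s..m, Real.exp (-(x^2/2) * (r - s))) =
        (Real.exp (-(x^2/2) * (s - s)) - Real.exp (-(x^2/2) * (m - s))) / (x^2/2) :=
      exp_antideriv _ _ _ _ hc
    have e2 : (∫ r in m..s', Real.exp (-(x^2/2) * (t - r))) =
        (Real.exp (-(x^2/2) * (t - m)) - Real.exp (-(x^2/2) * (t - s'))) / (-(x^2/2)) := by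
      have : ∀ r, Real.exp (-(x^2/2) * (t - r)) = Real.exp (-(-(x^2/2)) * (r - t)) := by
        intro r; ring_nf
      simp_rw [this]
      rw [exp_antideriv (-(x^2/2)) t m s' (by simpa using hc)]
      try ring_nf
    have hmval1 : -(x^2/2) * (m - s) = -(x^2/4) * (t - s) := by rw [hm]; ring
    have hmval2 : -(x^2/2) * (t - m) = -(x^2/4) * (t - s) := by rw [hm]; ring
    rw [hsplit]
    calc _ ≤ (∫ r in s..m, Real.exp (-(x^2/2) * (r - s))) +
            ∫ r in m..s', Real.exp (-(x^2/2) * (t - r)) := add_le_add hb1 hb2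
      _ = 2 * (1 - 2 * Real.exp (-(x^2 / 4) * (t - s)) + Real.exp (-(x^2 / 2) * (t - s'))) / x^2 := by
        rw [e1, e2, hmval1, hmval2, show -(x^2/2) * (s - s) = 0 by ring, Real.exp_zero]
        field_simp
        ring
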